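/- arXiv:2204.08418 — 6 statements merged into one kernel-verified Lean document; each statement's English description precedes it below -/
import Mathlib

section
/- Let N and L be positive integers and let e_0, …, e_{L−1} ∈ ℂ^N be envelopes, at least one of which is nonzero. Then the Enveloped Sinusoid frame vectors a_{l,k,m} form a tight frame with frame constant α = N·Σ_{l=0}^{L−1} ‖e_l‖²; that is, for every w ∈ ℂ^N, Σ_{l=0}^{L−1} Σ_{k=0}^{N−1} Σ_{m=0}^{N−1} |⟨w, a_{l,k,m}⟩|² = (N·Σ_{l=0}^{L−1} ‖e_l‖²)·‖w‖². -/
open scoped BigOperators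
open Finset

/-- Inner product on ℂ^N: ⟨v, w⟩ = Σ_n v[n]·conj(w[n]). -/
noncomputable def cInner {N : ℕ} (v w : Fin N → ℂ) : ℂ :=
  ∑ n, v n * (starRingEnd ℂ) (w n)

/-- Norm on ℂ^N: ‖v‖ = ⟨v, v⟩^(1/2) = (Σ_n |v[n]|²)^(1/2). -/
noncomputable def cNorm {N : ℕ} (v : Fin N → ℂ) : ℝ :=
  Real.sqrt (∑ n, ‖v n‖ ^ 2)

/-- Enveloped Sinusoid frame vector:
    a_{e,k,m}[n] = e[(n−m) mod N]·exp(2πi·k·(n−m)/N).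
    (Fin subtraction `n - m` is subtraction mod N.) -/
noncomputable def espVec {N : ℕ} (e : Fin N → ℂ) (k m : Fin N) : Fin N → ℂ :=
  fun n => e (n - m) *
    Complex.exp (2 * Real.pi * Complex.I * ((k : ℕ) : ℂ) *
      (((((n : ℕ) : ℤ) - ((m : ℕ) : ℤ)) : ℤ) : ℂ) / ((N : ℕ) : ℂ))

lemma sum_exp_eq (N : ℕ) (hN : 0 < N) (j : ℤ) :
    ∑ k : Fin N, Complex.exp (2 * Real.pi * Complex.I * ((k : ℕ) : ℂ) * (j : ℂ) / (N : ℂ)) =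
      if (N : ℤ) ∣ j then (N : ℂ) else 0 := by
  have hNne : (N : ℂ) ≠ 0 := Nat.cast_ne_zero.mpr hN.ne'
  set x : ℂ := Complex.exp (2 * Real.pi * Complex.I * (j : ℂ) / (N : ℂ)) with hx
  have hpow : ∀ k : Fin N, Complex.exp (2 * Real.pi * Complex.I * ((k : ℕ) : ℂ) * (j : ℂ) / (N : ℂ)) = x ^ (k : ℕ) := by
    intro k
    rw [hx, ← Complex.exp_nat_mul]
    ring_nf
  have hxN : x ^ N = 1 := by
    rw [hx, ← Complex.exp_nat_mul]
    have : (N : ℂ) * (2 * Real.pi * Complex.I * (j : ℂ) / (N : ℂ)) = (j : ℂ) * (2 * Real.pi * Complex.I) := by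
      field_simp
    rw [this]
    exact Complex.exp_int_mul_two_pi_mul_I j
  simp_rw [hpow]
  rw [Fin.sum_univ_eq_sum_range]
  by_cases hdvd : (N : ℤ) ∣ j
  · obtain ⟨t, ht⟩ := hdvd
    have hx1 : x = 1 := by
      rw [hx, ht]
      have : 2 * Real.pi * Complex.I * (((N : ℤ) * t : ℤ) : ℂ) / (N : ℂ) = (t : ℂ) * (2 * Real.pi * Complex.I) := by
        push_cast; field_simp
      rw [this]
      exact Complex.exp_int_mul_two_pi_mul_I t
    rw [if_pos ⟨t, ht⟩]
    simp [hx1]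
  · have hx1 : x ≠ 1 := by
      intro h
      rw [hx, Complex.exp_eq_one_iff] at h
      obtain ⟨n, hn⟩ := h
      apply hdvd
      refine ⟨n, ?_⟩
      have h2 : (2 * (Real.pi : ℂ) * Complex.I) ≠ 0 := by
        simp [Real.pi_ne_zero, Complex.I_ne_zero]
      have hj : (j : ℂ) = (N : ℂ) * (n : ℂ) := by
        field_simp at hn
        have := mul_left_cancel₀ h2 (by linear_combination 2 * (Real.pi : ℂ) * Complex.I * hn : 2 * (Real.pi : ℂ) * Complex.I * (j : ℂ) = 2 * (Real.pi : ℂ) * Complex.I * ((N : ℂ) * n))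
        exact this
      exact_mod_cast hj
    rw [geom_sum_eq hx1, hxN]
    simp [if_neg hdvd]

lemma dvd_iff_eq (N : ℕ) (n p : Fin N) : (N : ℤ) ∣ ((p : ℤ) - (n : ℤ)) ↔ p = n := by
  constructor
  · intro h
    have hb : |((p : ℤ) - (n : ℤ))| < (N : ℤ) := by
      rw [abs_lt]
      constructor <;> [skip; skip] <;>
        · have h1 := p.isLt; have h2 := n.isLt; omega
    have := Int.eq_zero_of_abs_lt_dvd h hb
    have : (p : ℤ) = (n : ℤ) := by omega
    exact Fin.ext (by exact_mod_cast this)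
  · rintro rfl; simp

lemma key (N : ℕ) (hN : 0 < N) (el w : Fin N → ℂ) :
    ∑ k : Fin N, ∑ m : Fin N,
        cInner w (espVec el k m) * (starRingEnd ℂ) (cInner w (espVec el k m)) =
      (N : ℂ) * (∑ j, el j * (starRingEnd ℂ) (el j)) * (∑ n, w n * (starRingEnd ℂ) (w n)) := by
  have hAconj : ∀ (k : Fin N) (t : ℤ),
      (starRingEnd ℂ) (2 * Real.pi * Complex.I * ((k : ℕ) : ℂ) * (t : ℂ) / (N : ℂ)) =
        -(2 * Real.pi * Complex.I * ((k : ℕ) : ℂ) * (t : ℂ) / (N : ℂ)) := by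
    intro k t
    simp only [map_div₀, map_mul, Complex.conj_I, Complex.conj_ofReal, map_ofNat,
      map_natCast, map_intCast]
    ring
  have expand : ∀ k m : Fin N,
      cInner w (espVec el k m) * (starRingEnd ℂ) (cInner w (espVec el k m)) =
        ∑ n : Fin N, ∑ p : Fin N,
          (w n * (starRingEnd ℂ) (w p) * (starRingEnd ℂ) (el (n - m)) * el (p - m)) *
            Complex.exp (2 * Real.pi * Complex.I * ((k : ℕ) : ℂ) *
              ((((p : ℤ) - (n : ℤ)) : ℤ) : ℂ) / (N : ℂ)) := by
    intro k m
    unfold cInner espVec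
    rw [map_sum, Finset.sum_mul_sum]
    refine Finset.sum_congr rfl fun n _ => Finset.sum_congr rfl fun p _ => ?_
    simp only [map_mul, RingHomCompTriple.comp_apply, RingHom.id_apply, starRingEnd_self_apply]
    rw [← Complex.exp_conj, hAconj]
    rw [show (2 * Real.pi * Complex.I * ((k : ℕ) : ℂ) * ((((p : ℤ) - (n : ℤ)) : ℤ) : ℂ) / (N : ℂ))
        = (2 * Real.pi * Complex.I * ((k : ℕ) : ℂ) * ((((p : ℤ) - (m : ℤ)) : ℤ) : ℂ) / (N : ℂ))
          + -(2 * Real.pi * Complex.I * ((k : ℕ) : ℂ) * ((((n : ℤ) - (m : ℤ)) : ℤ) : ℂ) / (N : ℂ))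
      from by push_cast; ring, Complex.exp_add]
    ring
  haveI : NeZero N := ⟨hN.ne'⟩
  simp_rw [expand]
  rw [Finset.sum_comm]
  have h3 : ∀ n : Fin N, ∑ m : Fin N, (starRingEnd ℂ) (el (n - m)) * el (n - m)
      = ∑ j : Fin N, el j * (starRingEnd ℂ) (el j) := by
    intro n
    rw [show (∑ m : Fin N, (starRingEnd ℂ) (el (n - m)) * el (n - m))
        = ∑ m : Fin N, (starRingEnd ℂ) (el ((Equiv.subLeft n) m)) * el ((Equiv.subLeft n) m)
      from rfl,
      Equiv.sum_comp (Equiv.subLeft n) (fun j => (starRingEnd ℂ) (el j) * el j)]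
    exact Finset.sum_congr rfl fun j _ => mul_comm _ _
  have step2 : ∀ m : Fin N,
      ∑ k : Fin N, ∑ n : Fin N, ∑ p : Fin N,
          (w n * (starRingEnd ℂ) (w p) * (starRingEnd ℂ) (el (n - m)) * el (p - m)) *
            Complex.exp (2 * Real.pi * Complex.I * ((k : ℕ) : ℂ) *
              ((((p : ℤ) - (n : ℤ)) : ℤ) : ℂ) / (N : ℂ)) =
        (N : ℂ) * ∑ n : Fin N, w n * (starRingEnd ℂ) (w n) *
          ((starRingEnd ℂ) (el (n - m)) * el (n - m)) := by
    intro m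
    rw [Finset.sum_comm]
    have h1 : ∀ n : Fin N,
        (∑ k : Fin N, ∑ p : Fin N,
            (w n * (starRingEnd ℂ) (w p) * (starRingEnd ℂ) (el (n - m)) * el (p - m)) *
              Complex.exp (2 * Real.pi * Complex.I * ((k : ℕ) : ℂ) *
                ((((p : ℤ) - (n : ℤ)) : ℤ) : ℂ) / (N : ℂ)))
          = (N : ℂ) * (w n * (starRingEnd ℂ) (w n) *
              ((starRingEnd ℂ) (el (n - m)) * el (n - m))) := by
      intro n
      rw [Finset.sum_comm]
      have h2 : ∀ p : Fin N,
          (∑ k : Fin N,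
              (w n * (starRingEnd ℂ) (w p) * (starRingEnd ℂ) (el (n - m)) * el (p - m)) *
                Complex.exp (2 * Real.pi * Complex.I * ((k : ℕ) : ℂ) *
                  ((((p : ℤ) - (n : ℤ)) : ℤ) : ℂ) / (N : ℂ)))
            = if p = n then
                (w n * (starRingEnd ℂ) (w p) * (starRingEnd ℂ) (el (n - m)) * el (p - m)) * N
              else 0 := by
        intro p
        rw [← Finset.mul_sum, sum_exp_eq N hN]
        by_cases h : p = n
        · simp [(dvd_iff_eq N n p).mpr h, h]
        · have hnd : ¬ ((N : ℤ) ∣ ((p : ℤ) - (n : ℤ))) := fun hd => h ((dvd_iff_eq N n p).mp hd)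
          simp [h, hnd]
      simp_rw [h2]
      rw [Finset.sum_ite_eq' Finset.univ n]
      simp only [Finset.mem_univ, if_true]
      ring
    simp_rw [h1]
    rw [← Finset.mul_sum]
  simp_rw [step2]
  calc ∑ m : Fin N, ((N : ℂ) * ∑ n : Fin N, w n * (starRingEnd ℂ) (w n) *
          ((starRingEnd ℂ) (el (n - m)) * el (n - m)))
      = (N : ℂ) * ∑ n : Fin N, ∑ m : Fin N, w n * (starRingEnd ℂ) (w n) *
          ((starRingEnd ℂ) (el (n - m)) * el (n - m)) := by
        rw [← Finset.mul_sum, Finset.sum_comm]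
    _ = (N : ℂ) * ∑ n : Fin N, w n * (starRingEnd ℂ) (w n) *
          ∑ j : Fin N, el j * (starRingEnd ℂ) (el j) := by
        congr 1
        exact Finset.sum_congr rfl fun n _ => by rw [← Finset.mul_sum, h3 n]
    _ = (N : ℂ) * (∑ j : Fin N, el j * (starRingEnd ℂ) (el j)) *
          (∑ n : Fin N, w n * (starRingEnd ℂ) (w n)) := by
        rw [← Finset.sum_mul]
        ring

/-- The Enveloped Sinusoid frame vectors form a tight frame with frame constant
    α = N·Σ_l ‖e_l‖². -/
theorem esp_tight_frame (N L : ℕ) (hN : 0 < N) (hL : 0 < L)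
    (e : Fin L → Fin N → ℂ) (he : ∃ l, e l ≠ 0) (w : Fin N → ℂ) :
    ∑ l : Fin L, ∑ k : Fin N, ∑ m : Fin N,
        ‖cInner w (espVec (e l) k m)‖ ^ 2 =
      ((N : ℝ) * ∑ l : Fin L, cNorm (e l) ^ 2) * cNorm w ^ 2 := by
  have hnorm : ∀ (v : Fin N → ℂ), (cNorm v) ^ 2 = ∑ n, ‖v n‖ ^ 2 := by
    intro v
    unfold cNorm
    rw [Real.sq_sqrt]
    positivity
  have hsum : ∀ v : Fin N → ℂ,
      (∑ n, v n * (starRingEnd ℂ) (v n)) = (((cNorm v) ^ 2 : ℝ) : ℂ) := by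
    intro v
    rw [hnorm v, Complex.ofReal_sum]
    refine Finset.sum_congr rfl fun n _ => ?_
    rw [Complex.mul_conj]
    norm_cast
    exact (Complex.sq_norm _).symm
  have habs : ∀ z : ℂ, ‖z‖ ^ 2 = (z * (starRingEnd ℂ) z).re := by
    intro z
    rw [Complex.mul_conj, Complex.ofReal_re, Complex.sq_norm]
  calc ∑ l : Fin L, ∑ k : Fin N, ∑ m : Fin N,
          ‖cInner w (espVec (e l) k m)‖ ^ 2
      = ∑ l : Fin L, (∑ k : Fin N, ∑ m : Fin N,
          cInner w (espVec (e l) k m) * (starRingEnd ℂ) (cInner w (espVec (e l) k m))).re := by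
        refine Finset.sum_congr rfl fun l _ => ?_
        rw [Complex.re_sum]
        refine Finset.sum_congr rfl fun k _ => ?_
        rw [Complex.re_sum]
        exact Finset.sum_congr rfl fun m _ => habs _
    _ = ∑ l : Fin L, ((N : ℝ) * cNorm (e l) ^ 2 * cNorm w ^ 2) := by
        refine Finset.sum_congr rfl fun l _ => ?_
        rw [key N hN (e l) w, hsum, hsum]
        rw [show (N : ℂ) * (((cNorm (e l)) ^ 2 : ℝ) : ℂ) * (((cNorm w) ^ 2 : ℝ) : ℂ)
            = (((N : ℝ) * cNorm (e l) ^ 2 * cNorm w ^ 2 : ℝ) : ℂ) from by push_cast; ring]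
        exact Complex.ofReal_re _
    _ = ((N : ℝ) * ∑ l : Fin L, cNorm (e l) ^ 2) * cNorm w ^ 2 := by
        rw [← Finset.sum_mul, ← Finset.mul_sum]
end

section
/- Let N and L be positive integers and let e_0, …, e_{L−1} ∈ ℂ^N be envelopes satisfying ‖e_l‖ = (N·L)^{−1/2} for every l. Then the Enveloped Sinusoid frame vectors a_{l,k,m} form a Parseval frame; that is, for every w ∈ ℂ^N, Σ_{l=0}^{L−1} Σ_{k=0}^{N−1} Σ_{m=0}^{N−1} |⟨w, a_{l,k,m}⟩|² = ‖w‖². -/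
open scoped BigOperators
open Finset

lemma sum_exp_key (N : ℕ) (hN : 0 < N) (d : ℤ) :
    ∑ k : Fin N, Complex.exp (2 * Real.pi * Complex.I * ((k : ℕ) : ℂ) * (d : ℂ) / (N : ℂ))
      = if (N : ℤ) ∣ d then (N : ℂ) else 0 := by
  have hNC : (N : ℂ) ≠ 0 := Nat.cast_ne_zero.mpr hN.ne'
  set z : ℂ := Complex.exp (2 * Real.pi * Complex.I * (d : ℂ) / (N : ℂ)) with hz
  have hzk : ∀ k : Fin N,
      Complex.exp (2 * Real.pi * Complex.I * ((k : ℕ) : ℂ) * (d : ℂ) / (N : ℂ))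
        = z ^ (k : ℕ) := by
    intro k
    rw [hz, ← Complex.exp_nat_mul]
    congr 1
    ring
  have hzN : z ^ N = 1 := by
    rw [hz, ← Complex.exp_nat_mul]
    have : (N : ℂ) * (2 * Real.pi * Complex.I * (d : ℂ) / (N : ℂ))
        = (d : ℂ) * (2 * Real.pi * Complex.I) := by
      field_simp
    rw [this]
    exact_mod_cast Complex.exp_int_mul_two_pi_mul_I d
  simp only [hzk]
  rw [Fin.sum_univ_eq_sum_range (fun k => z ^ k) N]
  by_cases hdvd : (N : ℤ) ∣ d
  · obtain ⟨c, hc⟩ := hdvd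
    have hz1 : z = 1 := by
      rw [hz]
      have : 2 * (Real.pi : ℂ) * Complex.I * (d : ℂ) / (N : ℂ)
          = (c : ℂ) * (2 * Real.pi * Complex.I) := by
        rw [hc]; push_cast; field_simp
      rw [this]
      exact_mod_cast Complex.exp_int_mul_two_pi_mul_I c
    rw [if_pos (show (N : ℤ) ∣ d from ⟨c, hc⟩)]
    simp [hz1]
  · have hz1 : z ≠ 1 := by
      intro h
      rw [hz, Complex.exp_eq_one_iff] at h
      obtain ⟨c, hc⟩ := h
      have h2 : (2 : ℂ) * Real.pi * Complex.I ≠ 0 := by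
        simp [Real.pi_ne_zero, Complex.I_ne_zero, Complex.ofReal_ne_zero]
      have : (d : ℂ) = (c : ℂ) * (N : ℂ) := by
        field_simp at hc
        -- hc : 2 * π * I * d = c * (2 * π * I) * N (roughly)
        have := hc
        apply mul_left_cancel₀ h2
        ring_nf
        ring_nf at this
        linear_combination (2 * (Real.pi : ℂ) * Complex.I) * this
      have hd : d = c * N := by exact_mod_cast this
      exact hdvd ⟨c, by linarith [hd]⟩
    rw [geom_sum_eq hz1, hzN, if_neg hdvd]
    simp

lemma fin_dvd_iff {N : ℕ} (n n' : Fin N) :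
    (N : ℤ) ∣ (((n' : ℕ) : ℤ) - ((n : ℕ) : ℤ)) ↔ n = n' := by
  constructor
  · intro hdvd
    have h1 : (n : ℕ) < N := n.isLt
    have h2 : (n' : ℕ) < N := n'.isLt
    have h0 : (((n' : ℕ) : ℤ) - ((n : ℕ) : ℤ)) = 0 :=
      Int.eq_zero_of_dvd_of_natAbs_lt_natAbs hdvd (by omega)
    have : (n : ℕ) = (n' : ℕ) := by omega
    exact Fin.ext this
  · rintro rfl
    simp

/-- If every envelope has norm (N·L)^(−1/2), the Enveloped Sinusoid frame
    vectors form a Parseval frame. -/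
theorem esp_parseval_frame (N L : ℕ) (hN : 0 < N) (hL : 0 < L)
    (e : Fin L → Fin N → ℂ)
    (he : ∀ l, cNorm (e l) = 1 / Real.sqrt ((N : ℝ) * (L : ℝ)))
    (w : Fin N → ℂ) :
    ∑ l : Fin L, ∑ k : Fin N, ∑ m : Fin N,
        ‖cInner w (espVec (e l) k m)‖ ^ 2 = cNorm w ^ 2 := by
  haveI : NeZero N := ⟨hN.ne'⟩
  have hNC : (N : ℂ) ≠ 0 := Nat.cast_ne_zero.mpr hN.ne'
  have hLC : (L : ℂ) ≠ 0 := Nat.cast_ne_zero.mpr hL.ne'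
  have hNL : (0 : ℝ) < (N : ℝ) * (L : ℝ) := by positivity
  -- envelope norm squared
  have he2 : ∀ l, (∑ j, ‖e l j‖ ^ 2) = 1 / ((N : ℝ) * (L : ℝ)) := by
    intro l
    have hnn : 0 ≤ ∑ j, ‖e l j‖ ^ 2 :=
      Finset.sum_nonneg fun j _ => sq_nonneg _
    have h := he l
    unfold cNorm at h
    calc (∑ j, ‖e l j‖ ^ 2)
        = Real.sqrt (∑ j, ‖e l j‖ ^ 2) ^ 2 := (Real.sq_sqrt hnn).symm
      _ = (1 / Real.sqrt ((N : ℝ) * (L : ℝ))) ^ 2 := by rw [h]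
      _ = 1 / ((N : ℝ) * (L : ℝ)) := by
          rw [div_pow, one_pow, Real.sq_sqrt hNL.le]
  -- conj z * z = ↑(abs z ^ 2)
  have habs : ∀ z : ℂ, ((‖z‖ ^ 2 : ℝ) : ℂ) = z * (starRingEnd ℂ) z := by
    intro z
    rw [Complex.sq_norm, Complex.mul_conj]
  have hwnorm : cNorm w ^ 2 = ∑ n, ‖w n‖ ^ 2 := by
    unfold cNorm
    exact Real.sq_sqrt (Finset.sum_nonneg fun n _ => sq_nonneg _)
  rw [hwnorm]
  -- cast to ℂ
  have : ((∑ l : Fin L, ∑ k : Fin N, ∑ m : Fin N,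
      ‖cInner w (espVec (e l) k m)‖ ^ 2 : ℝ) : ℂ)
      = ((∑ n, ‖w n‖ ^ 2 : ℝ) : ℂ) := by
    simp only [Complex.ofReal_sum]
    simp only [habs]
    -- main complex identity
    have hperl : ∀ l : Fin L,
        ∑ k : Fin N, ∑ m : Fin N,
          cInner w (espVec (e l) k m) * (starRingEnd ℂ) (cInner w (espVec (e l) k m))
        = (1 / (L : ℂ)) * ∑ n, w n * (starRingEnd ℂ) (w n) := by
      intro l
      set E := e l with hE
      -- expansion of each term
      have expand : ∀ k m : Fin N,
          cInner w (espVec E k m) * (starRingEnd ℂ) (cInner w (espVec E k m))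
          = ∑ n : Fin N, ∑ n' : Fin N,
              ((w n * (starRingEnd ℂ) (w n')) *
                ((starRingEnd ℂ) (E (n - m)) * E (n' - m))) *
              Complex.exp (2 * Real.pi * Complex.I * ((k : ℕ) : ℂ) *
                (((((n' : ℕ) : ℤ) - ((n : ℕ) : ℤ) : ℤ)) : ℂ) / (N : ℂ)) := by
        intro k m
        have hconj : ∀ n : Fin N, (starRingEnd ℂ) (espVec E k m n)
            = (starRingEnd ℂ) (E (n - m)) *
              Complex.exp (-(2 * Real.pi * Complex.I * ((k : ℕ) : ℂ) *
                (((((n : ℕ) : ℤ) - ((m : ℕ) : ℤ) : ℤ)) : ℂ)) / (N : ℂ)) := by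
          intro n
          simp only [espVec, map_mul]
          congr 1
          rw [← Complex.exp_conj]
          congr 1
          simp only [map_div₀, map_mul, map_neg, Complex.conj_I,
            Complex.conj_ofReal, map_intCast, map_natCast, map_ofNat]
          ring
        unfold cInner
        rw [map_sum, Finset.sum_mul_sum]
        refine Finset.sum_congr rfl fun n _ => Finset.sum_congr rfl fun n' _ => ?_
        simp only [map_mul, Complex.conj_conj]
        rw [hconj n]
        simp only [espVec]
        have hexp : Complex.exp (-(2 * Real.pi * Complex.I * ((k : ℕ) : ℂ) *
                (((((n : ℕ) : ℤ) - ((m : ℕ) : ℤ) : ℤ)) : ℂ)) / (N : ℂ)) *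
              Complex.exp (2 * Real.pi * Complex.I * ((k : ℕ) : ℂ) *
                (((((n' : ℕ) : ℤ) - ((m : ℕ) : ℤ) : ℤ)) : ℂ) / (N : ℂ))
            = Complex.exp (2 * Real.pi * Complex.I * ((k : ℕ) : ℂ) *
                (((((n' : ℕ) : ℤ) - ((n : ℕ) : ℤ) : ℤ)) : ℂ) / (N : ℂ)) := by
          rw [← Complex.exp_add]
          congr 1
          push_cast
          ring
        linear_combination (w n * (starRingEnd ℂ) (w n') *
          ((starRingEnd ℂ) (E (n - m)) * E (n' - m))) * hexp
      simp only [expand]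
      -- move the k-sum innermost
      rw [Finset.sum_comm]
      have step1 : ∀ m : Fin N,
          ∑ k : Fin N, ∑ n : Fin N, ∑ n' : Fin N,
            ((w n * (starRingEnd ℂ) (w n')) *
              ((starRingEnd ℂ) (E (n - m)) * E (n' - m))) *
            Complex.exp (2 * Real.pi * Complex.I * ((k : ℕ) : ℂ) *
              (((((n' : ℕ) : ℤ) - ((n : ℕ) : ℤ) : ℤ)) : ℂ) / (N : ℂ))
          = ∑ n : Fin N, (w n * (starRingEnd ℂ) (w n)) *
              ((starRingEnd ℂ) (E (n - m)) * E (n - m)) * (N : ℂ) := by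
        intro m
        rw [Finset.sum_comm]
        refine Finset.sum_congr rfl fun n _ => ?_
        rw [Finset.sum_comm]
        have : ∀ n' : Fin N,
            ∑ k : Fin N,
              ((w n * (starRingEnd ℂ) (w n')) *
                ((starRingEnd ℂ) (E (n - m)) * E (n' - m))) *
              Complex.exp (2 * Real.pi * Complex.I * ((k : ℕ) : ℂ) *
                (((((n' : ℕ) : ℤ) - ((n : ℕ) : ℤ) : ℤ)) : ℂ) / (N : ℂ))
            = if n = n' then
                ((w n * (starRingEnd ℂ) (w n')) *
                  ((starRingEnd ℂ) (E (n - m)) * E (n' - m))) * (N : ℂ)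
              else 0 := by
          intro n'
          rw [← Finset.mul_sum, sum_exp_key N hN]
          rw [if_congr (fin_dvd_iff n n') rfl rfl]
          split <;> simp
        simp only [this]
        rw [Finset.sum_ite_eq]
        simp
      simp only [step1]
      rw [Finset.sum_comm]
      have hsumE : (∑ j, (starRingEnd ℂ) (E j) * E j)
          = ((1 / ((N : ℝ) * (L : ℝ)) : ℝ) : ℂ) := by
        have : ∀ j, (starRingEnd ℂ) (E j) * E j
            = ((‖E j‖ ^ 2 : ℝ) : ℂ) := by
          intro j; rw [habs, mul_comm]
        simp only [this]
        rw [← Complex.ofReal_sum]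
        exact_mod_cast congrArg (fun x : ℝ => (x : ℂ)) (he2 l)
      have step2 : ∀ n : Fin N,
          ∑ m : Fin N, (w n * (starRingEnd ℂ) (w n)) *
            ((starRingEnd ℂ) (E (n - m)) * E (n - m)) * (N : ℂ)
          = (w n * (starRingEnd ℂ) (w n)) * (1 / (L : ℂ)) := by
        intro n
        have : ∑ m : Fin N, (w n * (starRingEnd ℂ) (w n)) *
            ((starRingEnd ℂ) (E (n - m)) * E (n - m)) * (N : ℂ)
            = ((w n * (starRingEnd ℂ) (w n)) * (N : ℂ)) *
              ∑ m : Fin N, (starRingEnd ℂ) (E (n - m)) * E (n - m) := by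
          rw [Finset.mul_sum]
          exact Finset.sum_congr rfl fun m _ => by ring
        rw [this]
        rw [Fintype.sum_equiv (Equiv.subLeft n)
          (fun m => (starRingEnd ℂ) (E (n - m)) * E (n - m))
          (fun j => (starRingEnd ℂ) (E j) * E j) (fun m => by simp [Equiv.subLeft])]
        rw [hsumE]
        push_cast
        field_simp
      simp only [step2]
      rw [← Finset.sum_mul]
      ring
    simp only [hperl]
    rw [Finset.sum_const, Finset.card_univ, Fintype.card_fin, nsmul_eq_mul]
    field_simp
  exact_mod_cast this
end

section
/- Let N and L be positive integers and let e_0, …, e_{L−1} ∈ ℂ^N be envelopes. Then for every w ∈ ℂ^N, every l ∈ {0, …, L−1}, and every m ∈ {0, …, N−1}, summing the squared moduli of the Enveloped Sinusoid frame coefficients over the frequency index gives Σ_{k=0}^{N−1} |⟨w, a_{l,k,m}⟩|² = N·Σ_{n=0}^{N−1} |e_l[n]|²·|w[(n+m) mod N]|². -/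
open scoped BigOperators
open Finset

lemma orth (N : ℕ) (hN : N ≠ 0) (a : ℤ) :
    ∑ k : Fin N, Complex.exp (2 * Real.pi * Complex.I / N) ^ ((k : ℤ) * a) =
      if (N : ℤ) ∣ a then (N : ℂ) else 0 := by
  set ζ : ℂ := Complex.exp (2 * Real.pi * Complex.I / N) with hζ
  have hprim : IsPrimitiveRoot ζ N := Complex.isPrimitiveRoot_exp N hN
  have hk : ∀ k : Fin N, ζ ^ ((k : ℤ) * a) = (ζ ^ a) ^ (k : ℕ) := by
    intro k
    rw [mul_comm, zpow_mul, zpow_natCast]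
  simp_rw [hk]
  by_cases hdvd : (N : ℤ) ∣ a
  · have h1 : ζ ^ a = 1 := (hprim.zpow_eq_one_iff_dvd a).mpr hdvd
    simp [h1, hdvd]
  · have h1 : ζ ^ a ≠ 1 := fun h => hdvd ((hprim.zpow_eq_one_iff_dvd a).mp h)
    have hpow : (ζ ^ a) ^ N = 1 := by
      rw [← zpow_natCast, ← zpow_mul, mul_comm, zpow_mul, zpow_natCast,
        hprim.pow_eq_one, one_zpow]
    rw [Fin.sum_univ_eq_sum_range (fun i => (ζ ^ a) ^ i), geom_sum_eq h1, hpow]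
    simp [hdvd]

/-- Summing the squared moduli of the ESP frame coefficients over the
    frequency index. -/
theorem esp_freq_sum (N L : ℕ) (hN : 0 < N) (hL : 0 < L)
    (e : Fin L → Fin N → ℂ) (w : Fin N → ℂ) (l : Fin L) (m : Fin N) :
    ∑ k : Fin N, ‖cInner w (espVec (e l) k m)‖ ^ 2 =
      (N : ℝ) * ∑ n : Fin N,
        ‖e l n‖ ^ 2 * ‖w (n + m)‖ ^ 2 := by
  have hNz : N ≠ 0 := hN.ne'
  haveI : NeZero N := ⟨hNz⟩
  set ζ : ℂ := Complex.exp (2 * Real.pi * Complex.I / N) with hζ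
  have hzne : ζ ≠ 0 := Complex.exp_ne_zero _
  set t : Fin N → ℤ := fun n => ((n : ℕ) : ℤ) - ((m : ℕ) : ℤ) with ht
  set g : Fin N → ℂ := fun n => w n * (starRingEnd ℂ) (e l (n - m)) with hg
  have hconjζ : (starRingEnd ℂ) ζ = ζ⁻¹ := by
    rw [hζ, ← Complex.exp_conj, ← Complex.exp_neg]
    congr 1
    simp [map_div₀, Complex.conj_I, map_ofNat]
    ring
  have hv : ∀ (k n : Fin N), espVec (e l) k m n = e l (n - m) * ζ ^ ((k : ℤ) * t n) := by
    intro k n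
    unfold espVec
    congr 1
    rw [hζ, ← Complex.exp_int_mul]
    congr 1
    simp only [ht]
    push_cast
    ring
  have hc : ∀ k : Fin N, cInner w (espVec (e l) k m) =
      ∑ n : Fin N, g n * ζ ^ (-((k : ℤ) * t n)) := by
    intro k
    unfold cInner
    refine Finset.sum_congr rfl fun n _ => ?_
    rw [hv, map_mul, map_zpow₀, hconjζ, inv_zpow, ← zpow_neg, hg]
    ring
  have key : ∑ k : Fin N, cInner w (espVec (e l) k m) *
      (starRingEnd ℂ) (cInner w (espVec (e l) k m)) =
      (N : ℂ) * ∑ n : Fin N, g n * (starRingEnd ℂ) (g n) := by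
    have hcc : ∀ k : Fin N, (starRingEnd ℂ) (cInner w (espVec (e l) k m)) =
        ∑ n : Fin N, (starRingEnd ℂ) (g n) * ζ ^ ((k : ℤ) * t n) := by
      intro k
      rw [hc, map_sum]
      refine Finset.sum_congr rfl fun n _ => ?_
      rw [map_mul, map_zpow₀, hconjζ, inv_zpow, ← zpow_neg, neg_neg]
    calc ∑ k : Fin N, cInner w (espVec (e l) k m) *
          (starRingEnd ℂ) (cInner w (espVec (e l) k m))
        = ∑ k : Fin N, ∑ n : Fin N, ∑ n' : Fin N,
            g n * (starRingEnd ℂ) (g n') * ζ ^ ((k : ℤ) * (t n' - t n)) := by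
          refine Finset.sum_congr rfl fun k _ => ?_
          rw [hcc, hc, Finset.sum_mul_sum]
          refine Finset.sum_congr rfl fun n _ => Finset.sum_congr rfl fun n' _ => ?_
          rw [mul_mul_mul_comm, ← zpow_add₀ hzne]
          congr 2
          ring
      _ = ∑ n : Fin N, ∑ n' : Fin N,
            g n * (starRingEnd ℂ) (g n') * ∑ k : Fin N, ζ ^ ((k : ℤ) * (t n' - t n)) := by
          rw [Finset.sum_comm]
          refine Finset.sum_congr rfl fun n _ => ?_
          rw [Finset.sum_comm]
          refine Finset.sum_congr rfl fun n' _ => ?_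
          rw [Finset.mul_sum]
      _ = ∑ n : Fin N, ∑ n' : Fin N,
            g n * (starRingEnd ℂ) (g n') * (if n' = n then (N : ℂ) else 0) := by
          refine Finset.sum_congr rfl fun n _ => Finset.sum_congr rfl fun n' _ => ?_
          rw [orth N hNz]
          congr 1
          have hts : t n' - t n = ((n' : ℕ) : ℤ) - ((n : ℕ) : ℤ) := by rw [ht]; ring
          rw [hts]
          by_cases h : n' = n
          · simp [h]
          · have hne : ((n' : ℕ) : ℤ) - ((n : ℕ) : ℤ) ≠ 0 := by
              intro h0
              exact h (Fin.ext (by omega))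
            have hnd : ¬ ((N : ℤ) ∣ ((n' : ℕ) : ℤ) - ((n : ℕ) : ℤ)) := by
              intro hd
              have h1 := n.isLt
              have h2 := n'.isLt
              have hb : |((n' : ℕ) : ℤ) - ((n : ℕ) : ℤ)| < (N : ℤ) :=
                abs_lt.mpr ⟨by omega, by omega⟩
              have := Int.eq_zero_of_abs_lt_dvd hd hb
              exact hne this
            simp [h, hnd]
      _ = (N : ℂ) * ∑ n : Fin N, g n * (starRingEnd ℂ) (g n) := by
          rw [Finset.mul_sum]
          refine Finset.sum_congr rfl fun n _ => ?_
          rw [Finset.sum_eq_single n (fun n' _ h => by simp [h]) (by simp)]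
          simp [mul_comm]
  have lift : ((∑ k : Fin N, ‖cInner w (espVec (e l) k m)‖ ^ 2 : ℝ) : ℂ) =
      (((N : ℝ) * ∑ n : Fin N,
        ‖e l n‖ ^ 2 * ‖w (n + m)‖ ^ 2 : ℝ) : ℂ) := by
    push_cast
    calc (∑ k : Fin N, (‖cInner w (espVec (e l) k m)‖ : ℂ) ^ 2)
        = ∑ k : Fin N, cInner w (espVec (e l) k m) *
            (starRingEnd ℂ) (cInner w (espVec (e l) k m)) := by
          refine Finset.sum_congr rfl fun k _ => ?_
          rw [Complex.mul_conj]
          norm_cast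
          rw [Complex.sq_norm]
      _ = (N : ℂ) * ∑ n : Fin N, g n * (starRingEnd ℂ) (g n) := key
      _ = (N : ℂ) * ∑ n : Fin N,
            (‖e l n‖ : ℂ) ^ 2 * (‖w (n + m)‖ : ℂ) ^ 2 := by
          congr 1
          rw [← Equiv.sum_comp (Equiv.subRight m) (fun n => (‖e l n‖ : ℂ) ^ 2 * (‖w (n + m)‖ : ℂ) ^ 2)]
          refine Finset.sum_congr rfl fun n _ => ?_
          simp only [Equiv.subRight_apply]
          rw [sub_add_cancel, Complex.mul_conj, hg]
          norm_cast
          rw [Complex.normSq_mul, Complex.normSq_conj, ← Complex.sq_norm, ← Complex.sq_norm]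
          ring
  exact_mod_cast lift
end

section
/- Let N and L be positive integers and let e_0, …, e_{L−1} ∈ ℂ^N be envelopes. Then the Enveloped Sinusoid analysis coefficients can be computed in the Fourier domain by a frequency-shifted correlation: for every w ∈ ℂ^N, every l ∈ {0, …, L−1}, and all k, m ∈ {0, …, N−1}, ⟨w, a_{l,k,m}⟩ = (1/N)·Σ_{f=0}^{N−1} DFT(w)[f]·conj(DFT(e_l)[(f−k) mod N])·exp(2πi·f·m/N). -/
open scoped BigOperators
open Finset

/-- The (non-unitary) discrete Fourier transform:
    DFT(v)[f] = Σ_n v[n]·exp(−2πi·f·n/N). -/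
noncomputable def dft {N : ℕ} (v : Fin N → ℂ) : Fin N → ℂ :=
  fun f => ∑ n, v n *
    Complex.exp (-(2 * Real.pi * Complex.I * ((f : ℕ) : ℂ) * ((n : ℕ) : ℂ))
      / ((N : ℕ) : ℂ))



noncomputable def ee (N : ℕ) (t : ℤ) : ℂ :=
  Complex.exp (2 * Real.pi * Complex.I * (t : ℂ) / (N : ℂ))

lemma ee_add (N : ℕ) (a b : ℤ) : ee N (a + b) = ee N a * ee N b := by
  rw [ee, ee, ee, ← Complex.exp_add]
  congr 1
  push_cast
  ring

lemma ee_dvd (N : ℕ) (hN : 0 < N) (t : ℤ) (h : (N : ℤ) ∣ t) : ee N t = 1 := by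
  obtain ⟨c, rfl⟩ := h
  have hNC : (N : ℂ) ≠ 0 := Nat.cast_ne_zero.mpr hN.ne'
  have : (2 * Real.pi * Complex.I * ((((N : ℤ) * c : ℤ)) : ℂ) / (N : ℂ))
      = (c : ℂ) * (2 * Real.pi * Complex.I) := by
    field_simp
    push_cast
    ring
  rw [ee, this, Complex.exp_int_mul_two_pi_mul_I]

lemma ee_congr (N : ℕ) (hN : 0 < N) (a b : ℤ) (h : (N : ℤ) ∣ (a - b)) :
    ee N a = ee N b := by
  have : a = b + (a - b) := by ring
  rw [this, ee_add, ee_dvd N hN _ h, mul_one]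

lemma ee_nat_mul (N : ℕ) (n : ℕ) (t : ℤ) : ee N ((n : ℤ) * t) = ee N t ^ n := by
  induction n with
  | zero => simp [ee]
  | succ n ih =>
      have : ((n + 1 : ℕ) : ℤ) * t = (n : ℤ) * t + t := by push_cast; ring
      rw [this, ee_add, ih, pow_succ]

lemma ee_sum (N : ℕ) (hN : 0 < N) (t : ℤ) :
    ∑ f : Fin N, ee N ((f : ℤ) * t) = if (N : ℤ) ∣ t then (N : ℂ) else 0 := by
  have hstep : ∀ f : Fin N, ee N ((f : ℤ) * t) = ee N t ^ (f : ℕ) := fun f => by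
    exact_mod_cast ee_nat_mul N f t
  simp only [hstep]
  rw [Fin.sum_univ_eq_sum_range (fun i => ee N t ^ i) N]
  by_cases h : (N : ℤ) ∣ t
  · simp [ee_dvd N hN t h, h]
  · rw [if_neg h]
    have hz : ee N t ≠ 1 := by
      intro hz
      apply h
      rw [ee, Complex.exp_eq_one_iff] at hz
      obtain ⟨n, hn⟩ := hz
      have hNC : (N : ℂ) ≠ 0 := Nat.cast_ne_zero.mpr hN.ne'
      have h2 : (2 * (Real.pi : ℂ) * Complex.I) ≠ 0 := by
        simp [Real.pi_ne_zero, Complex.I_ne_zero]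
      have : (t : ℂ) = (n : ℂ) * (N : ℂ) := by
        field_simp at hn
        have : 2 * (Real.pi : ℂ) * Complex.I * (t : ℂ)
            = 2 * (Real.pi : ℂ) * Complex.I * ((n : ℂ) * (N : ℂ)) := by
          rw [hn]; ring
        exact mul_left_cancel₀ h2 this
      have ht : t = n * N := by exact_mod_cast this
      exact ⟨n, by rw [ht]; ring⟩
    rw [geom_sum_eq hz]
    have : ee N t ^ N = 1 := by
      rw [← ee_nat_mul]
      exact ee_dvd N hN _ ⟨t, rfl⟩
    rw [this]
    simp

lemma fin_sub_dvd {N : ℕ} (a b : Fin N) :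
    (N : ℤ) ∣ ((((a - b : Fin N) : ℕ) : ℤ) - (((a : ℕ) : ℤ) - ((b : ℕ) : ℤ))) := by
  have hb : (b : ℕ) ≤ N := le_of_lt b.isLt
  have key : (((a - b : Fin N) : ℕ) : ℤ) ≡ ((a : ℕ) : ℤ) - ((b : ℕ) : ℤ) [ZMOD (N : ℤ)] := by
    have h : ((a - b : Fin N) : ℕ) = (N - (b : ℕ) + (a : ℕ)) % N := by
      rw [Fin.sub_def]
    rw [h]
    push_cast [hb]
    have h1 : ((N : ℤ) - (b : ℕ) + (a : ℕ)) % (N : ℤ)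
        = (((a : ℕ) : ℤ) - ((b : ℕ) : ℤ)) % (N : ℤ) := by
      rw [show (N : ℤ) - (b : ℕ) + (a : ℕ) = (((a:ℕ):ℤ) - ((b:ℕ):ℤ)) + (N:ℤ) * 1 by ring,
        Int.add_mul_emod_self_left]
    calc ((N : ℤ) - (b : ℕ) + (a : ℕ)) % (N : ℤ)
        ≡ ((N : ℤ) - (b : ℕ) + (a : ℕ)) [ZMOD (N : ℤ)] := Int.emod_emod_of_dvd _ dvd_rfl
      _ ≡ (((a : ℕ) : ℤ) - ((b : ℕ) : ℤ)) [ZMOD (N : ℤ)] := by rw [Int.ModEq, h1]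
  simpa using key.symm.dvd

lemma fin_cond {N : ℕ} (hN : 0 < N) (p m q : Fin N) :
    ((N : ℤ) ∣ (((q : ℕ) : ℤ) + ((m : ℕ) : ℤ) - ((p : ℕ) : ℤ))) ↔ q = p - m := by
  have hd := fin_sub_dvd p m
  constructor
  · intro h
    have h2 : (N : ℤ) ∣ (((q : ℕ) : ℤ) - (((p - m : Fin N) : ℕ) : ℤ)) := by
      have h3 := h.sub hd
      have : (((q : ℕ) : ℤ) + ((m : ℕ) : ℤ) - ((p : ℕ) : ℤ))
          - ((((p - m : Fin N) : ℕ) : ℤ) - (((p : ℕ) : ℤ) - ((m : ℕ) : ℤ)))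
          = (((q : ℕ) : ℤ) - (((p - m : Fin N) : ℕ) : ℤ)) := by ring
      rwa [this] at h3
    have hq : ((q : ℕ) : ℤ) < N := by exact_mod_cast q.isLt
    have hq0 : (0:ℤ) ≤ ((q : ℕ) : ℤ) := Int.natCast_nonneg _
    have hpm : (((p - m : Fin N) : ℕ) : ℤ) < N := by exact_mod_cast (p - m).isLt
    have hpm0 : (0:ℤ) ≤ (((p - m : Fin N) : ℕ) : ℤ) := Int.natCast_nonneg _
    have habs : |(((q : ℕ) : ℤ) - (((p - m : Fin N) : ℕ) : ℤ))| < (N : ℤ) := by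
      rw [abs_lt]; omega
    have := Int.eq_zero_of_abs_lt_dvd h2 habs
    have hval : ((q : ℕ) : ℤ) = (((p - m : Fin N) : ℕ) : ℤ) := by omega
    exact Fin.ext (by exact_mod_cast hval)
  · rintro rfl
    have : (((p - m : Fin N) : ℕ) : ℤ) + ((m : ℕ) : ℤ) - ((p : ℕ) : ℤ)
        = (((p - m : Fin N) : ℕ) : ℤ) - (((p : ℕ) : ℤ) - ((m : ℕ) : ℤ)) := by ring
    rw [this]
    exact hd

lemma ee_mul3 (N : ℕ) (a b c : ℤ) : ee N a * ee N b * ee N c = ee N (a + b + c) := by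
  rw [ee_add, ee_add]

/-- ESP analysis coefficients as a frequency-shifted correlation in the
    Fourier domain. -/
theorem esp_analysis_fourier (N L : ℕ) (hN : 0 < N) (hL : 0 < L)
    (e : Fin L → Fin N → ℂ) (w : Fin N → ℂ) (l : Fin L) (k m : Fin N) :
    cInner w (espVec (e l) k m) =
      (1 / ((N : ℕ) : ℂ)) * ∑ f : Fin N,
        dft w f * (starRingEnd ℂ) (dft (e l) (f - k)) *
          Complex.exp (2 * Real.pi * Complex.I * ((f : ℕ) : ℂ) * ((m : ℕ) : ℂ)
            / ((N : ℕ) : ℂ)) := by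
  have hNC : ((N : ℕ) : ℂ) ≠ 0 := Nat.cast_ne_zero.mpr hN.ne'
  set c : Fin N → ℂ := fun q => (starRingEnd ℂ) (e l q) with hcdef
  set T : Fin N → Fin N → ℂ :=
    fun p q => w p * c q * ee N (-(((k : ℕ) : ℤ) * ((q : ℕ) : ℤ))) with hTdef
  -- LHS
  have hLHS : cInner w (espVec (e l) k m)
      = ∑ p : Fin N, w p * c (p - m) *
          ee N (-(((k : ℕ) : ℤ) * (((p : ℕ) : ℤ) - ((m : ℕ) : ℤ)))) := by
    unfold cInner espVec
    refine Finset.sum_congr rfl fun p _ => ?_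
    rw [map_mul, ← mul_assoc]
    congr 1
    rw [← Complex.exp_conj]
    unfold ee
    congr 1
    simp only [map_div₀, map_mul, map_sub, map_intCast, Complex.conj_I,
      Complex.conj_ofReal, map_ofNat, Complex.conj_natCast]
    push_cast
    ring
  -- dft w
  have hdw : ∀ f : Fin N, dft w f
      = ∑ p : Fin N, w p * ee N (-(((f : ℕ) : ℤ) * ((p : ℕ) : ℤ))) := by
    intro f
    unfold dft ee
    refine Finset.sum_congr rfl fun p _ => ?_
    congr 1
    push_cast
    ring
  -- conj dft e
  have hde : ∀ f : Fin N, (starRingEnd ℂ) (dft (e l) (f - k))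
      = ∑ q : Fin N, c q * ee N ((((f : ℕ) : ℤ) - ((k : ℕ) : ℤ)) * ((q : ℕ) : ℤ)) := by
    intro f
    unfold dft
    rw [map_sum]
    refine Finset.sum_congr rfl fun q _ => ?_
    rw [map_mul]
    congr 1
    have step1 : (starRingEnd ℂ) (Complex.exp
        (-(2 * Real.pi * Complex.I * (((f - k : Fin N) : ℕ) : ℂ) * ((q : ℕ) : ℂ))
          / ((N : ℕ) : ℂ)))
        = ee N ((((f - k : Fin N) : ℕ) : ℤ) * ((q : ℕ) : ℤ)) := by
      rw [← Complex.exp_conj]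
      unfold ee
      congr 1
      simp only [map_div₀, map_mul, map_neg, Complex.conj_I, Complex.conj_ofReal,
        map_ofNat, Complex.conj_natCast]
      push_cast
      ring
    rw [step1]
    refine ee_congr N hN _ _ ?_
    rw [← sub_mul]
    exact (fin_sub_dvd f k).mul_right _
  -- per-frequency expansion
  have hRHS : ∀ f : Fin N,
      dft w f * (starRingEnd ℂ) (dft (e l) (f - k)) *
        Complex.exp (2 * Real.pi * Complex.I * ((f : ℕ) : ℂ) * ((m : ℕ) : ℂ)
          / ((N : ℕ) : ℂ))
      = ∑ p : Fin N, ∑ q : Fin N, T p q *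
          ee N (((f : ℕ) : ℤ) * (((q : ℕ) : ℤ) + ((m : ℕ) : ℤ) - ((p : ℕ) : ℤ))) := by
    intro f
    have hm : Complex.exp (2 * Real.pi * Complex.I * ((f : ℕ) : ℂ) * ((m : ℕ) : ℂ)
          / ((N : ℕ) : ℂ)) = ee N (((f : ℕ) : ℤ) * ((m : ℕ) : ℤ)) := by
      unfold ee; congr 1; push_cast; ring
    rw [hdw, hde f, hm, Finset.sum_mul_sum, Finset.sum_mul]
    refine Finset.sum_congr rfl fun p _ => ?_
    rw [Finset.sum_mul]
    refine Finset.sum_congr rfl fun q _ => ?_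
    calc w p * ee N (-(((f : ℕ) : ℤ) * ((p : ℕ) : ℤ)))
          * (c q * ee N ((((f : ℕ) : ℤ) - ((k : ℕ) : ℤ)) * ((q : ℕ) : ℤ)))
          * ee N (((f : ℕ) : ℤ) * ((m : ℕ) : ℤ))
        = w p * c q * (ee N (-(((f : ℕ) : ℤ) * ((p : ℕ) : ℤ)))
            * ee N ((((f : ℕ) : ℤ) - ((k : ℕ) : ℤ)) * ((q : ℕ) : ℤ))
            * ee N (((f : ℕ) : ℤ) * ((m : ℕ) : ℤ))) := by ring
      _ = w p * c q * ee N (-(((f : ℕ) : ℤ) * ((p : ℕ) : ℤ))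
            + (((f : ℕ) : ℤ) - ((k : ℕ) : ℤ)) * ((q : ℕ) : ℤ)
            + ((f : ℕ) : ℤ) * ((m : ℕ) : ℤ)) := by rw [ee_mul3]
      _ = w p * c q * ee N (-(((k : ℕ) : ℤ) * ((q : ℕ) : ℤ))
            + ((f : ℕ) : ℤ) * (((q : ℕ) : ℤ) + ((m : ℕ) : ℤ) - ((p : ℕ) : ℤ))) := by
            congr 1
            ring_nf
      _ = T p q * ee N (((f : ℕ) : ℤ) * (((q : ℕ) : ℤ) + ((m : ℕ) : ℤ) - ((p : ℕ) : ℤ))) := by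
            rw [ee_add, hTdef]
            ring
  rw [hLHS]
  symm
  calc (1 / ((N : ℕ) : ℂ)) * ∑ f : Fin N,
        dft w f * (starRingEnd ℂ) (dft (e l) (f - k)) *
          Complex.exp (2 * Real.pi * Complex.I * ((f : ℕ) : ℂ) * ((m : ℕ) : ℂ)
            / ((N : ℕ) : ℂ))
      = (1 / ((N : ℕ) : ℂ)) * ∑ f : Fin N, ∑ p : Fin N, ∑ q : Fin N, T p q *
          ee N (((f : ℕ) : ℤ) * (((q : ℕ) : ℤ) + ((m : ℕ) : ℤ) - ((p : ℕ) : ℤ))) := by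
        rw [Finset.sum_congr rfl fun f _ => hRHS f]
    _ = (1 / ((N : ℕ) : ℂ)) * ∑ p : Fin N, ∑ q : Fin N, ∑ f : Fin N, T p q *
          ee N (((f : ℕ) : ℤ) * (((q : ℕ) : ℤ) + ((m : ℕ) : ℤ) - ((p : ℕ) : ℤ))) := by
        rw [Finset.sum_comm]
        congr 1
        refine Finset.sum_congr rfl fun p _ => ?_
        rw [Finset.sum_comm]
    _ = (1 / ((N : ℕ) : ℂ)) * ∑ p : Fin N, ∑ q : Fin N, T p q *
          (if (N : ℤ) ∣ (((q : ℕ) : ℤ) + ((m : ℕ) : ℤ) - ((p : ℕ) : ℤ))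
            then ((N : ℕ) : ℂ) else 0) := by
        congr 1
        refine Finset.sum_congr rfl fun p _ => ?_
        refine Finset.sum_congr rfl fun q _ => ?_
        rw [← Finset.mul_sum, ee_sum N hN]
    _ = (1 / ((N : ℕ) : ℂ)) * ∑ p : Fin N, T p (p - m) * ((N : ℕ) : ℂ) := by
        congr 1
        refine Finset.sum_congr rfl fun p _ => ?_
        have : ∀ q : Fin N, T p q *
            (if (N : ℤ) ∣ (((q : ℕ) : ℤ) + ((m : ℕ) : ℤ) - ((p : ℕ) : ℤ))
              then ((N : ℕ) : ℂ) else 0)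
            = if q = p - m then T p q * ((N : ℕ) : ℂ) else 0 := by
          intro q
          rw [mul_ite, mul_zero, if_congr (fin_cond hN p m q) rfl rfl]
        rw [Finset.sum_congr rfl fun q _ => this q,
          Finset.sum_ite_eq' univ (p - m) (fun q => T p q * ((N : ℕ) : ℂ))]
        simp
    _ = ∑ p : Fin N, T p (p - m) := by
        rw [← Finset.sum_mul]
        field_simp
    _ = ∑ p : Fin N, w p * c (p - m) *
          ee N (-(((k : ℕ) : ℤ) * (((p : ℕ) : ℤ) - ((m : ℕ) : ℤ)))) := by
        refine Finset.sum_congr rfl fun p _ => ?_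
        simp only [hTdef]
        congr 1
        refine ee_congr N hN _ _ ?_
        have h := (fin_sub_dvd p m).mul_left ((k : ℕ) : ℤ)
        have heq : -(((k : ℕ) : ℤ) * (((p - m : Fin N) : ℕ) : ℤ))
            - -(((k : ℕ) : ℤ) * (((p : ℕ) : ℤ) - ((m : ℕ) : ℤ)))
            = -(((k : ℕ) : ℤ) * ((((p - m : Fin N) : ℕ) : ℤ)
                - (((p : ℕ) : ℤ) - ((m : ℕ) : ℤ)))) := by ring
        rw [heq]
        exact h.neg_right
end

section
/- Let N and L be positive integers and let e_0, …, e_{L−1} ∈ ℂ^N be envelopes satisfying ‖e_l‖ = (N·L)^{−1/2} for every l. Then the Enveloped Sinusoid frame vectors reproduce every signal from its frame coefficients: for every w ∈ ℂ^N, w = Σ_{l=0}^{L−1} Σ_{k=0}^{N−1} Σ_{m=0}^{N−1} ⟨w, a_{l,k,m}⟩·a_{l,k,m}. -/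
open scoped BigOperators
open Finset

lemma esp_sum_exp_eq (N : ℕ) (hN : 0 < N) (n p : Fin N) :
    ∑ k : Fin N, Complex.exp (2 * Real.pi * Complex.I * ((k : ℕ) : ℂ) *
        ((((n : ℕ) : ℤ) - ((p : ℕ) : ℤ) : ℤ) : ℂ) / ((N : ℕ) : ℂ))
      = if n = p then (N : ℂ) else 0 := by
  set a : ℤ := ((n : ℕ) : ℤ) - ((p : ℕ) : ℤ) with ha
  have hNC : ((N : ℕ) : ℂ) ≠ 0 := by exact_mod_cast hN.ne'
  set ζ : ℂ := Complex.exp (2 * Real.pi * Complex.I * (a : ℂ) / N) with hζ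
  have hterm : ∀ k : Fin N,
      Complex.exp (2 * Real.pi * Complex.I * ((k : ℕ) : ℂ) * (a : ℂ) / N) = ζ ^ (k : ℕ) := by
    intro k
    rw [hζ, ← Complex.exp_nat_mul]
    congr 1
    ring
  rw [Finset.sum_congr rfl (fun k _ => hterm k)]
  rw [Fin.sum_univ_eq_sum_range (fun i => ζ ^ i)]
  have hζN : ζ ^ N = 1 := by
    rw [hζ, ← Complex.exp_nat_mul]
    have h3 : (N : ℂ) * (2 * Real.pi * Complex.I * (a : ℂ) / N)
        = (a : ℂ) * (2 * Real.pi * Complex.I) := by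
      field_simp
    rw [h3, Complex.exp_int_mul_two_pi_mul_I]
  by_cases hnp : n = p
  · have ha0 : a = 0 := by simp [ha, hnp]
    simp [hζ, ha0, hnp]
  · have hane : a ≠ 0 := by
      simp only [ha, sub_ne_zero]
      exact_mod_cast fun h => hnp (Fin.ext (by exact_mod_cast h))
    have hζ1 : ζ ≠ 1 := by
      intro h
      rw [hζ, Complex.exp_eq_one_iff] at h
      obtain ⟨j, hj⟩ := h
      have h2 : (2:ℂ) * Real.pi * Complex.I ≠ 0 := Complex.two_pi_I_ne_zero
      have hC : (a : ℂ) = (j : ℂ) * N := by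
        field_simp at hj
        apply mul_left_cancel₀ h2
        rw [hj]; ring
      have hZ : a = j * N := by exact_mod_cast hC
      have h1 := n.isLt
      have h2' := p.isLt
      rcases lt_trichotomy j 0 with hj0 | hj0 | hj0
      · nlinarith [hZ, h1, h2', Int.le_of_lt hj0]
      · exact hane (by simp [hZ, hj0])
      · nlinarith [hZ, h1, h2']
    rw [geom_sum_eq hζ1, hζN]
    simp [hnp]

lemma esp_conj_exp_mul (N : ℕ) (k n m p : Fin N) :
    (starRingEnd ℂ) (Complex.exp (2 * Real.pi * Complex.I * ((k : ℕ) : ℂ) *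
        ((((p : ℕ) : ℤ) - ((m : ℕ) : ℤ) : ℤ) : ℂ) / ((N : ℕ) : ℂ)))
      * Complex.exp (2 * Real.pi * Complex.I * ((k : ℕ) : ℂ) *
        ((((n : ℕ) : ℤ) - ((m : ℕ) : ℤ) : ℤ) : ℂ) / ((N : ℕ) : ℂ))
      = Complex.exp (2 * Real.pi * Complex.I * ((k : ℕ) : ℂ) *
        ((((n : ℕ) : ℤ) - ((p : ℕ) : ℤ) : ℤ) : ℂ) / ((N : ℕ) : ℂ)) := by
  rw [← Complex.exp_conj, ← Complex.exp_add]
  congr 1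
  simp only [map_div₀, map_mul, map_sub, Complex.conj_I, map_ofNat,
    Complex.conj_ofReal, map_natCast, map_intCast]
  push_cast
  ring

/-- If every envelope has norm (N·L)^(−1/2), the ESP frame reproduces every
    signal from its frame coefficients. -/
theorem esp_parseval_reconstruction (N L : ℕ) (hN : 0 < N) (hL : 0 < L)
    (e : Fin L → Fin N → ℂ)
    (he : ∀ l, cNorm (e l) = 1 / Real.sqrt ((N : ℝ) * (L : ℝ)))
    (w : Fin N → ℂ) :
    w = ∑ l : Fin L, ∑ k : Fin N, ∑ m : Fin N,
        cInner w (espVec (e l) k m) • espVec (e l) k m := by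
  haveI : NeZero N := ⟨hN.ne'⟩
  have hNL : (0:ℝ) < (N:ℝ) * L := by positivity
  -- envelope norm squared
  have hS : ∀ l, ∑ j, Complex.normSq (e l j) = 1 / ((N:ℝ) * L) := by
    intro l
    have h := he l
    unfold cNorm at h
    have hnn : (0:ℝ) ≤ ∑ j, ‖e l j‖ ^ 2 :=
      Finset.sum_nonneg fun j _ => by positivity
    have h2 := congrArg (fun x : ℝ => x ^ 2) h
    simp only [div_pow, one_pow, Real.sq_sqrt hnn, Real.sq_sqrt hNL.le] at h2
    simpa [Complex.sq_norm] using h2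
  funext n
  simp only [Finset.sum_apply, Pi.smul_apply, smul_eq_mul]
  have key : ∀ l, ∑ k : Fin N, ∑ m : Fin N,
      cInner w (espVec (e l) k m) * espVec (e l) k m n
      = (N : ℂ) * w n * ((1 : ℂ) / ((N:ℂ) * L)) := by
    intro l
    unfold cInner espVec
    rw [Finset.sum_comm]
    have hm : ∀ m : Fin N, ∑ k : Fin N,
        (∑ p, w p * (starRingEnd ℂ) (e l (p - m) *
          Complex.exp (2 * Real.pi * Complex.I * ((k : ℕ) : ℂ) *
            ((((p : ℕ) : ℤ) - ((m : ℕ) : ℤ) : ℤ) : ℂ) / ((N : ℕ) : ℂ)))) *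
        (e l (n - m) * Complex.exp (2 * Real.pi * Complex.I * ((k : ℕ) : ℂ) *
            ((((n : ℕ) : ℤ) - ((m : ℕ) : ℤ) : ℤ) : ℂ) / ((N : ℕ) : ℂ)))
        = (N : ℂ) * w n * (e l (n - m) * (starRingEnd ℂ) (e l (n - m))) := by
      intro m
      have step1 : ∀ k : Fin N,
          (∑ p, w p * (starRingEnd ℂ) (e l (p - m) *
            Complex.exp (2 * Real.pi * Complex.I * ((k : ℕ) : ℂ) *
              ((((p : ℕ) : ℤ) - ((m : ℕ) : ℤ) : ℤ) : ℂ) / ((N : ℕ) : ℂ)))) *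
          (e l (n - m) * Complex.exp (2 * Real.pi * Complex.I * ((k : ℕ) : ℂ) *
              ((((n : ℕ) : ℤ) - ((m : ℕ) : ℤ) : ℤ) : ℂ) / ((N : ℕ) : ℂ)))
          = ∑ p, (w p * (starRingEnd ℂ) (e l (p - m)) * e l (n - m)) *
              Complex.exp (2 * Real.pi * Complex.I * ((k : ℕ) : ℂ) *
                ((((n : ℕ) : ℤ) - ((p : ℕ) : ℤ) : ℤ) : ℂ) / ((N : ℕ) : ℂ)) := by
        intro k
        rw [Finset.sum_mul]
        refine Finset.sum_congr rfl fun p _ => ?_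
        rw [map_mul, ← esp_conj_exp_mul N k n m p]
        ring
      rw [Finset.sum_congr rfl fun k _ => step1 k, Finset.sum_comm]
      have step2 : ∀ p : Fin N,
          ∑ k : Fin N, (w p * (starRingEnd ℂ) (e l (p - m)) * e l (n - m)) *
              Complex.exp (2 * Real.pi * Complex.I * ((k : ℕ) : ℂ) *
                ((((n : ℕ) : ℤ) - ((p : ℕ) : ℤ) : ℤ) : ℂ) / ((N : ℕ) : ℂ))
          = (w p * (starRingEnd ℂ) (e l (p - m)) * e l (n - m)) *
              (if n = p then (N : ℂ) else 0) := by
        intro p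
        rw [← Finset.mul_sum, esp_sum_exp_eq N hN n p]
      rw [Finset.sum_congr rfl fun p _ => step2 p]
      simp only [mul_ite, mul_zero, Finset.sum_ite_eq, Finset.mem_univ, if_true]
      ring
    rw [Finset.sum_congr rfl fun m _ => hm m]
    have step3 : ∑ m : Fin N, (e l (n - m) * (starRingEnd ℂ) (e l (n - m)))
        = ((1 : ℂ) / ((N:ℂ) * L)) := by
      have hbij : ∑ m : Fin N, (e l (n - m) * (starRingEnd ℂ) (e l (n - m)))
          = ∑ j : Fin N, (e l j * (starRingEnd ℂ) (e l j)) :=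
        Equiv.sum_comp (Equiv.subLeft n) (fun j => e l j * (starRingEnd ℂ) (e l j))
      rw [hbij]
      have : ∑ j : Fin N, (e l j * (starRingEnd ℂ) (e l j))
          = ((∑ j, Complex.normSq (e l j) : ℝ) : ℂ) := by
        push_cast
        exact Finset.sum_congr rfl fun j _ => Complex.mul_conj (e l j)
      rw [this, hS l]
      push_cast
      ring
    rw [← Finset.mul_sum, step3]
  rw [Finset.sum_congr rfl fun l _ => key l, Finset.sum_const]
  have hNC : ((N:ℕ) : ℂ) ≠ 0 := by exact_mod_cast hN.ne'
  have hLC : ((L:ℕ) : ℂ) ≠ 0 := by exact_mod_cast hL.ne'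
  simp only [Finset.card_univ, Fintype.card_fin, nsmul_eq_mul]
  field_simp
end

section
/- Let N and L be positive integers and let e_0, …, e_{L−1} ∈ ℂ^N be envelopes, at least one of which is nonzero, and set α = N·Σ_{l=0}^{L−1} ‖e_l‖². Then the Enveloped Sinusoid frame reproduces every signal up to the frame constant: for every w ∈ ℂ^N, w = (1/α)·Σ_{l=0}^{L−1} Σ_{k=0}^{N−1} Σ_{m=0}^{N−1} ⟨w, a_{l,k,m}⟩·a_{l,k,m}. -/
open scoped BigOperators
open Finset

lemma key_exp_sum (N : ℕ) (hN : 0 < N) (d : ℤ) :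
    ∑ k : Fin N, Complex.exp (2 * Real.pi * Complex.I * ((k:ℕ):ℂ) * (d:ℂ) / (N:ℂ))
      = if (N:ℤ) ∣ d then (N:ℂ) else 0 := by
  have hNC : (N:ℂ) ≠ 0 := Nat.cast_ne_zero.mpr hN.ne'
  have h2 : (2 * (Real.pi:ℂ) * Complex.I) ≠ 0 := by
    simp [Real.pi_ne_zero, Complex.I_ne_zero]
  set ζ : ℂ := Complex.exp (2 * Real.pi * Complex.I * (d:ℂ) / (N:ℂ)) with hζ
  have hterm : ∀ k : ℕ, Complex.exp (2 * Real.pi * Complex.I * (k:ℂ) * (d:ℂ) / (N:ℂ)) = ζ ^ k := by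
    intro k
    rw [hζ, ← Complex.exp_nat_mul]
    ring_nf
  calc ∑ k : Fin N, Complex.exp (2 * Real.pi * Complex.I * ((k:ℕ):ℂ) * (d:ℂ) / (N:ℂ))
      = ∑ k ∈ range N, ζ ^ k := by
        rw [← Fin.sum_univ_eq_sum_range (fun i => ζ ^ i) N]
        exact Finset.sum_congr rfl fun k _ => hterm k
    _ = if (N:ℤ) ∣ d then (N:ℂ) else 0 := by
        by_cases hdvd : (N:ℤ) ∣ d
        · obtain ⟨c, hc⟩ := hdvd
          have hζ1 : ζ = 1 := by
            rw [hζ, Complex.exp_eq_one_iff]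
            refine ⟨c, ?_⟩
            rw [hc]; push_cast; field_simp
          simp [hζ1, hc, dvd_mul_right]
        · have hζN : ζ ^ N = 1 := by
            rw [hζ, ← Complex.exp_nat_mul]
            have : (N:ℂ) * (2 * Real.pi * Complex.I * (d:ℂ) / (N:ℂ)) = (d:ℂ) * (2 * Real.pi * Complex.I) := by
              field_simp
            rw [this, Complex.exp_int_mul_two_pi_mul_I]
          have hζne : ζ ≠ 1 := by
            intro h1
            rw [hζ, Complex.exp_eq_one_iff] at h1
            obtain ⟨n, hn⟩ := h1
            apply hdvd
            refine ⟨n, ?_⟩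
            have hd : (d:ℂ) = ((N:ℤ):ℂ) * (n:ℂ) := by
              field_simp at hn
              apply mul_left_cancel₀ h2
              push_cast
              linear_combination (2 * (Real.pi:ℂ) * Complex.I) * hn
            exact_mod_cast hd
          rw [geom_sum_eq hζne, hζN]
          simp [hdvd]

lemma exp_sum_fin (N : ℕ) (hN : 0 < N) (n p : Fin N) :
    ∑ k : Fin N, Complex.exp (2 * Real.pi * Complex.I * ((k:ℕ):ℂ) *
        ((((n:ℕ):ℤ) - ((p:ℕ):ℤ) : ℤ):ℂ) / (N:ℂ))
      = if n = p then (N:ℂ) else 0 := by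
  rw [key_exp_sum N hN]
  congr 1
  simp only [eq_iff_iff]
  constructor
  · intro h
    have h3 : ((n:ℕ):ℤ) - ((p:ℕ):ℤ) = 0 :=
      Int.eq_zero_of_dvd_of_natAbs_lt_natAbs h (by have := n.isLt; have := p.isLt; omega)
    exact Fin.ext (by omega)
  · rintro rfl; simp

lemma inner_k_sum (N : ℕ) (hN : 0 < N) (E w : Fin N → ℂ) (n m p : Fin N) :
    ∑ k : Fin N, (w p * (starRingEnd ℂ) (espVec E k m p)) * espVec E k m n
      = w p * (starRingEnd ℂ) (E (p - m)) * E (n - m) * (if n = p then (N:ℂ) else 0) := by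
  have hterm : ∀ k : Fin N,
      (w p * (starRingEnd ℂ) (espVec E k m p)) * espVec E k m n
      = w p * (starRingEnd ℂ) (E (p - m)) * E (n - m) *
        Complex.exp (2 * Real.pi * Complex.I * ((k:ℕ):ℂ) *
          ((((n:ℕ):ℤ) - ((p:ℕ):ℤ) : ℤ):ℂ) / (N:ℂ)) := by
    intro k
    simp only [espVec, map_mul]
    rw [← Complex.exp_conj]
    rw [show ((starRingEnd ℂ) (2 * Real.pi * Complex.I * ((k:ℕ):ℂ) *
        ((((p:ℕ):ℤ) - ((m:ℕ):ℤ) : ℤ):ℂ) / (N:ℂ)))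
      = -(2 * Real.pi * Complex.I * ((k:ℕ):ℂ) *
        ((((p:ℕ):ℤ) - ((m:ℕ):ℤ) : ℤ):ℂ) / (N:ℂ)) by
        simp [map_div₀, map_mul, Complex.conj_I, map_ofNat]
        push_cast
        ring]
    rw [show (w p * ((starRingEnd ℂ) (E (p - m)) *
        Complex.exp (-(2 * Real.pi * Complex.I * ((k:ℕ):ℂ) *
          ((((p:ℕ):ℤ) - ((m:ℕ):ℤ) : ℤ):ℂ) / (N:ℂ)))) *
        (E (n - m) * Complex.exp (2 * Real.pi * Complex.I * ((k:ℕ):ℂ) *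
          ((((n:ℕ):ℤ) - ((m:ℕ):ℤ) : ℤ):ℂ) / (N:ℂ))))
      = w p * (starRingEnd ℂ) (E (p - m)) * E (n - m) *
        (Complex.exp (-(2 * Real.pi * Complex.I * ((k:ℕ):ℂ) *
          ((((p:ℕ):ℤ) - ((m:ℕ):ℤ) : ℤ):ℂ) / (N:ℂ))) *
         Complex.exp (2 * Real.pi * Complex.I * ((k:ℕ):ℂ) *
          ((((n:ℕ):ℤ) - ((m:ℕ):ℤ) : ℤ):ℂ) / (N:ℂ))) by ring]
    rw [← Complex.exp_add]
    congr 2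
    push_cast
    field_simp
    ring
  rw [Finset.sum_congr rfl fun k _ => hterm k, ← Finset.mul_sum,
    exp_sum_fin N hN n p]

lemma frame_l (N : ℕ) (hN : 0 < N) (E w : Fin N → ℂ) (n : Fin N) :
    ∑ k : Fin N, ∑ m : Fin N, cInner w (espVec E k m) * espVec E k m n
      = (N:ℂ) * (∑ x : Fin N, (Complex.normSq (E x) : ℂ)) * w n := by
  haveI : NeZero N := ⟨hN.ne'⟩
  rw [Finset.sum_comm]
  have step : ∀ m : Fin N, ∑ k : Fin N, cInner w (espVec E k m) * espVec E k m n
      = (N:ℂ) * w n * (Complex.normSq (E (n - m)) : ℂ) := by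
    intro m
    calc ∑ k : Fin N, cInner w (espVec E k m) * espVec E k m n
        = ∑ k : Fin N, ∑ p : Fin N, (w p * (starRingEnd ℂ) (espVec E k m p)) * espVec E k m n := by
          simp [cInner, Finset.sum_mul]
      _ = ∑ p : Fin N, ∑ k : Fin N, (w p * (starRingEnd ℂ) (espVec E k m p)) * espVec E k m n :=
          Finset.sum_comm
      _ = ∑ p : Fin N, w p * (starRingEnd ℂ) (E (p - m)) * E (n - m) * (if n = p then (N:ℂ) else 0) :=
          Finset.sum_congr rfl fun p _ => inner_k_sum N hN E w n m p
      _ = w n * (starRingEnd ℂ) (E (n - m)) * E (n - m) * (N:ℂ) := by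
          rw [Finset.sum_eq_single n]
          · simp
          · intro p _ hp
            simp [Ne.symm hp]
          · intro h; exact absurd (Finset.mem_univ n) h
      _ = (N:ℂ) * w n * (E (n - m) * (starRingEnd ℂ) (E (n - m))) := by ring
      _ = (N:ℂ) * w n * (Complex.normSq (E (n - m)) : ℂ) := by rw [Complex.mul_conj]
  rw [Finset.sum_congr rfl fun m _ => step m, ← Finset.mul_sum]
  have hre : ∑ m : Fin N, (Complex.normSq (E (n - m)) : ℂ) = ∑ x : Fin N, (Complex.normSq (E x) : ℂ) := by
    apply Fintype.sum_equiv (Equiv.subLeft n)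
    intro m
    simp [Equiv.subLeft]
  rw [hre]
  ring

lemma cNorm_sq (N : ℕ) (v : Fin N → ℂ) :
    cNorm v ^ 2 = ∑ x : Fin N, Complex.normSq (v x) := by
  rw [cNorm, Real.sq_sqrt (Finset.sum_nonneg fun i _ => sq_nonneg _)]
  exact Finset.sum_congr rfl fun x _ => Complex.sq_norm (v x)

/-- The ESP frame reproduces every signal up to the frame constant
    α = N·Σ_l ‖e_l‖². -/
theorem esp_tight_reconstruction (N L : ℕ) (hN : 0 < N) (hL : 0 < L)
    (e : Fin L → Fin N → ℂ) (he : ∃ l, e l ≠ 0) (w : Fin N → ℂ) :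
    w = ((((N : ℝ) * ∑ l : Fin L, cNorm (e l) ^ 2 : ℝ) : ℂ))⁻¹ •
        ∑ l : Fin L, ∑ k : Fin N, ∑ m : Fin N,
          cInner w (espVec (e l) k m) • espVec (e l) k m := by
  set αR : ℝ := (N : ℝ) * ∑ l : Fin L, cNorm (e l) ^ 2 with hαR
  have hpos : 0 < αR := by
    obtain ⟨l₀, hl₀⟩ := he
    have hn : ∃ x : Fin N, e l₀ x ≠ 0 := by
      by_contra h
      push_neg at h
      exact hl₀ (funext h)
    obtain ⟨x₀, hx₀⟩ := hn
    apply mul_pos (by exact_mod_cast hN)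
    apply Finset.sum_pos' (fun l _ => sq_nonneg _) ⟨l₀, Finset.mem_univ l₀, ?_⟩
    rw [cNorm_sq]
    apply Finset.sum_pos' (fun x _ => Complex.normSq_nonneg _) ⟨x₀, Finset.mem_univ x₀, ?_⟩
    exact Complex.normSq_pos.mpr hx₀
  have hαC : ((αR : ℝ) : ℂ) ≠ 0 := by
    exact_mod_cast Complex.ofReal_ne_zero.mpr hpos.ne'
  have hS : ∑ l : Fin L, ∑ k : Fin N, ∑ m : Fin N,
      cInner w (espVec (e l) k m) • espVec (e l) k m = ((αR : ℝ) : ℂ) • w := by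
    funext n
    have heval : (∑ l : Fin L, ∑ k : Fin N, ∑ m : Fin N,
        cInner w (espVec (e l) k m) • espVec (e l) k m) n
        = ∑ l : Fin L, ∑ k : Fin N, ∑ m : Fin N,
          cInner w (espVec (e l) k m) * espVec (e l) k m n := by
      simp [Finset.sum_apply]
    rw [heval, Finset.sum_congr rfl fun l _ => frame_l N hN (e l) w n]
    have : ∑ l : Fin L, (N:ℂ) * (∑ x : Fin N, (Complex.normSq (e l x) : ℂ)) * w n
        = ((N:ℂ) * ∑ l : Fin L, (∑ x : Fin N, (Complex.normSq (e l x) : ℂ))) * w n := by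
      rw [← Finset.sum_mul, ← Finset.mul_sum]
    rw [this]
    have hcast : ((αR : ℝ) : ℂ) = (N:ℂ) * ∑ l : Fin L, (∑ x : Fin N, (Complex.normSq (e l x) : ℂ)) := by
      have hs : (∑ l : Fin L, cNorm (e l) ^ 2 : ℝ) = ∑ l : Fin L, ∑ x : Fin N, Complex.normSq (e l x) :=
        Finset.sum_congr rfl fun l _ => cNorm_sq N (e l)
      rw [hαR, hs]
      push_cast
      ring
    rw [Pi.smul_apply, smul_eq_mul, hcast]
  rw [hS, smul_smul, inv_mul_cancel₀ hαC, one_smul]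
end
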